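/- arXiv:2307.04347 — 2 statements merged into one kernel-verified Lean document; each statement's English description precedes it below -/
import Mathlib

section
/- (Gradient of the deduce loss, treating the binarization as the identity.) Let C be a CNF over atoms p_1,…,p_n with encoding matrix C, F a set of atoms with C ∪ F satisfiable and encoding f, and let v(t) ∈ ℝ^n be defined by v(t)[k] = t and v(t)[j] = v[j] for j ≠ k, where v = f + 1_{f=0}⊙b_p(x) ∈ {0,1}^n for some x ∈ [0,1]^n, and p_k ∉ F. Define L_deduce(t) = Σ_{i ∈ U} ∏_{j} (1 - L_{v(t)}[i,j]) where U indexes the clauses of C_deduce and L_{v(t)}[i,j] = 1_{C[i,j]=1}·v(t)[j] + 1_{C[i,j]=-1}·(1-v(t)[j]). Then dL_deduce/dt evaluated at t = v[k] equals -c if c > 0 clauses of C_deduce contain the literal p_k, equals c if c > 0 clauses of C_deduce contain ¬p_k, and equals 0 otherwise. -/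
theorem deduce_loss_gradient {m n : ℕ} (C : Fin m → Fin n → ℝ) (f x : Fin n → ℝ)
    (hC : ∀ i j, C i j = -1 ∨ C i j = 0 ∨ C i j = 1)
    (hf : ∀ j, f j = 0 ∨ f j = 1)
    (hx : ∀ j, x j ∈ Set.Icc (0 : ℝ) 1)
    (hsat : ∃ w : Fin n → Bool, (∀ j, f j = 1 → w j = true) ∧
      ∀ i, ∃ j, (C i j = 1 ∧ w j = true) ∨ (C i j = -1 ∧ w j = false))
    (k : Fin n) (hk : f k = 0)
    (v : Fin n → ℝ)
    (hv : ∀ j, v j = f j + (if f j = 0 then (1 : ℝ) else 0) *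
      (if (1 : ℝ) / 2 ≤ x j then 1 else 0))
    (U : Finset (Fin m))
    (hU : ∀ i, i ∈ U ↔ (Finset.univ.filter fun j => C i j ≠ 0).card =
      (Finset.univ.filter fun j => C i j = -1 ∧ f j = 1).card + 1)
    (cpos cneg : ℕ)
    (hcpos : cpos = (U.filter fun i => C i k = 1).card)
    (hcneg : cneg = (U.filter fun i => C i k = -1).card) :
    HasDerivAt
      (fun t : ℝ => ∑ i ∈ U, ∏ j,
        (1 - ((if C i j = 1 then (1 : ℝ) else 0) * Function.update v k t j +
              (if C i j = -1 then (1 : ℝ) else 0) * (1 - Function.update v k t j))))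
      (if 0 < cpos then -(cpos : ℝ) else if 0 < cneg then (cneg : ℝ) else 0)
      (v k) := by
  classical
  have hv1 : ∀ j, f j = 1 → v j = 1 := by
    intro j hj
    rw [hv j, hj]
    norm_num
  -- key: in a clause i ∈ U containing a literal on atom k, every other nonzero
  -- entry is a negative literal on an atom of F
  have key : ∀ i ∈ U, C i k ≠ 0 → ∀ j, j ≠ k → C i j ≠ 0 → C i j = -1 ∧ f j = 1 := by
    intro i hi hik j hjk hj
    have hUi := (hU i).mp hi
    set S := Finset.univ.filter fun j => C i j ≠ 0 with hS
    set T := Finset.univ.filter fun j => C i j = -1 ∧ f j = 1 with hT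
    have hkT : k ∉ T := by
      simp only [hT, Finset.mem_filter, Finset.mem_univ, true_and]
      rintro ⟨-, h2⟩
      rw [hk] at h2; norm_num at h2
    have hsub : insert k T ⊆ S := by
      intro a ha
      rcases Finset.mem_insert.mp ha with rfl | haT
      · simp [hS, hik]
      · simp only [hT, Finset.mem_filter] at haT
        simp only [hS, Finset.mem_filter, Finset.mem_univ, true_and]
        rw [haT.2.1]; norm_num
    have hcard : S.card ≤ (insert k T).card := by
      rw [Finset.card_insert_of_notMem hkT, hUi]
    have heq : insert k T = S := Finset.eq_of_subset_of_card_le hsub hcard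
    have hjS : j ∈ S := by simp [hS, hj]
    rw [← heq] at hjS
    rcases Finset.mem_insert.mp hjS with h | h
    · exact absurd h hjk
    · simpa [hT] using h
  -- satisfiability: not both cpos and cneg positive
  have hdisj : cpos = 0 ∨ cneg = 0 := by
    by_contra h
    push_neg at h
    obtain ⟨h1, h2⟩ := h
    rw [hcpos] at h1
    rw [hcneg] at h2
    obtain ⟨i, hi⟩ := Finset.card_ne_zero.mp h1
    obtain ⟨i', hi'⟩ := Finset.card_ne_zero.mp h2
    rw [Finset.mem_filter] at hi hi'
    obtain ⟨hiU, hik⟩ := hi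
    obtain ⟨hiU', hik'⟩ := hi'
    obtain ⟨w, hw1, hw2⟩ := hsat
    have wtrue : w k = true := by
      obtain ⟨j, hj⟩ := hw2 i
      rcases hj with ⟨hj1, hwj⟩ | ⟨hj1, hwj⟩
      · by_cases hjk : j = k
        · subst hjk; exact hwj
        · have hkey := key i hiU (by rw [hik]; norm_num) j hjk (by rw [hj1]; norm_num)
          rw [hkey.1] at hj1; norm_num at hj1
      · by_cases hjk : j = k
        · subst hjk; rw [hik] at hj1; norm_num at hj1
        · have hkey := key i hiU (by rw [hik]; norm_num) j hjk (by rw [hj1]; norm_num)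
          rw [hw1 j hkey.2] at hwj; exact absurd hwj (by simp)
    have wfalse : w k = false := by
      obtain ⟨j, hj⟩ := hw2 i'
      rcases hj with ⟨hj1, hwj⟩ | ⟨hj1, hwj⟩
      · by_cases hjk : j = k
        · subst hjk; rw [hik'] at hj1; norm_num at hj1
        · have hkey := key i' hiU' (by rw [hik']; norm_num) j hjk (by rw [hj1]; norm_num)
          rw [hkey.1] at hj1; norm_num at hj1
      · by_cases hjk : j = k
        · subst hjk; exact hwj
        · have hkey := key i' hiU' (by rw [hik']; norm_num) j hjk (by rw [hj1]; norm_num)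
          rw [hw1 j hkey.2] at hwj; exact absurd hwj (by simp)
    rw [wtrue] at wfalse
    exact absurd wfalse (by simp)
  -- derivative of each term
  have hterm : ∀ i ∈ U, HasDerivAt
      (fun t : ℝ => ∏ j,
        (1 - ((if C i j = 1 then (1 : ℝ) else 0) * Function.update v k t j +
              (if C i j = -1 then (1 : ℝ) else 0) * (1 - Function.update v k t j))))
      ((if C i k = -1 then (1 : ℝ) else 0) - (if C i k = 1 then (1 : ℝ) else 0)) (v k) := by
    intro i hi
    by_cases hik : C i k = 0
    · have hconst : (fun t : ℝ => ∏ j,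
          (1 - ((if C i j = 1 then (1 : ℝ) else 0) * Function.update v k t j +
                (if C i j = -1 then (1 : ℝ) else 0) * (1 - Function.update v k t j))))
          = fun _ : ℝ => ∏ j,
          (1 - ((if C i j = 1 then (1 : ℝ) else 0) * v j +
                (if C i j = -1 then (1 : ℝ) else 0) * (1 - v j))) := by
        funext t
        apply Finset.prod_congr rfl
        intro j _
        by_cases hjk : j = k
        · subst hjk
          rw [hik]
          norm_num
        · rw [Function.update_of_ne hjk]
      have hzero : (if C i k = -1 then (1 : ℝ) else 0) - (if C i k = 1 then (1 : ℝ) else 0)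
          = 0 := by rw [hik]; norm_num
      rw [hconst, hzero]
      exact hasDerivAt_const _ _
    · have hfun : (fun t : ℝ => ∏ j,
          (1 - ((if C i j = 1 then (1 : ℝ) else 0) * Function.update v k t j +
                (if C i j = -1 then (1 : ℝ) else 0) * (1 - Function.update v k t j))))
          = fun t : ℝ => 1 - ((if C i k = 1 then (1 : ℝ) else 0) * t +
              (if C i k = -1 then (1 : ℝ) else 0) * (1 - t)) := by
        funext t
        rw [Finset.prod_eq_single k]
        · rw [Function.update_self]
        · intro j _ hjk
          rw [Function.update_of_ne hjk]
          by_cases hj0 : C i j = 0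
          · rw [hj0]; norm_num
          · obtain ⟨hj1, hj2⟩ := key i hi hik j hjk hj0
            rw [hj1, hv1 j hj2]
            norm_num
        · intro h; exact absurd (Finset.mem_univ k) h
      rw [hfun]
      set a := (if C i k = 1 then (1 : ℝ) else 0) with ha
      set b := (if C i k = -1 then (1 : ℝ) else 0) with hb
      have hA : HasDerivAt (fun t : ℝ => a * t) a (v k) := by
        simpa using (hasDerivAt_id (v k)).const_mul a
      have hB : HasDerivAt (fun t : ℝ => b * (1 - t)) (-b) (v k) := by
        simpa using ((hasDerivAt_id (v k)).const_sub 1).const_mul b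
      have := (hA.fun_add hB).const_sub 1
      exact this.congr_deriv (by ring)
  have hsum := HasDerivAt.fun_sum hterm
  have hval : (∑ i ∈ U, ((if C i k = -1 then (1 : ℝ) else 0) -
        (if C i k = 1 then (1 : ℝ) else 0)))
      = (if 0 < cpos then -(cpos : ℝ) else if 0 < cneg then (cneg : ℝ) else 0) := by
    rw [Finset.sum_sub_distrib, Finset.sum_boole, Finset.sum_boole, ← hcpos, ← hcneg]
    rcases hdisj with h | h
    · rw [h]
      rcases Nat.eq_zero_or_pos cneg with h2 | h2
      · simp [h2]
      · simp [h2]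
    · rw [h]
      rcases Nat.eq_zero_or_pos cpos with h2 | h2
      · simp [h2]
      · simp [h2]
  rw [← hval]
  exact hsum
end

section
/- (Gradient of the unsat loss, treating the binarization as the identity.) In the setting above with p_k ∉ F, let U ⊆ {1,…,m} be the set of indices of clauses of C falsified by the assignment v, and define L_unsat(t) = (1/m)·Σ_{i ∈ U} ∏_j (1 - L_{v(t)}[i,j]) with v(t) as above. Then dL_unsat/dt at t = v[k] equals (c₂ - c₁)/m, where c₁ (resp. c₂) is the number of falsified clauses containing the literal p_k (resp. ¬p_k). -/
theorem unsat_loss_gradient {m n : ℕ} (C : Fin m → Fin n → ℝ) (f x : Fin n → ℝ)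
    (hC : ∀ i j, C i j = -1 ∨ C i j = 0 ∨ C i j = 1)
    (hf : ∀ j, f j = 0 ∨ f j = 1)
    (hx : ∀ j, x j ∈ Set.Icc (0 : ℝ) 1)
    (k : Fin n) (hk : f k = 0)
    (v : Fin n → ℝ)
    (hv : ∀ j, v j = f j + (if f j = 0 then (1 : ℝ) else 0) *
      (if (1 : ℝ) / 2 ≤ x j then 1 else 0))
    (U : Finset (Fin m))
    (hU : ∀ i, i ∈ U ↔ ¬ ∃ j, (C i j = 1 ∧ v j = 1) ∨ (C i j = -1 ∧ v j = 0))
    (c₁ c₂ : ℕ)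
    (hc₁ : c₁ = (U.filter fun i => C i k = 1).card)
    (hc₂ : c₂ = (U.filter fun i => C i k = -1).card) :
    HasDerivAt
      (fun t : ℝ => (1 / (m : ℝ)) * ∑ i ∈ U, ∏ j,
        (1 - ((if C i j = 1 then (1 : ℝ) else 0) * Function.update v k t j +
              (if C i j = -1 then (1 : ℝ) else 0) * (1 - Function.update v k t j))))
      (((c₂ : ℝ) - c₁) / m) (v k) := by
  -- v takes values in {0,1}
  have hv01 : ∀ j, v j = 0 ∨ v j = 1 := by
    intro j
    rcases hf j with h0 | h1
    · rw [hv j, h0, if_pos rfl]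
      by_cases h : (1 : ℝ) / 2 ≤ x j <;> simp [h] <;> exact lt_or_ge _ _
    · rw [hv j, h1]
      norm_num
  -- for i ∈ U, every literal value is 0
  have hlit : ∀ i ∈ U, ∀ j,
      (if C i j = 1 then (1 : ℝ) else 0) * v j +
        (if C i j = -1 then (1 : ℝ) else 0) * (1 - v j) = 0 := by
    intro i hi j
    have hnot := (hU i).mp hi
    push_neg at hnot
    obtain ⟨h1, h2⟩ := hnot j
    by_cases hc1 : C i j = 1
    · have : v j = 0 := (hv01 j).resolve_right (h1 hc1)
      norm_num [hc1, this]
    · by_cases hc2 : C i j = -1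
      · have : v j = 1 := (hv01 j).resolve_left (h2 hc2)
        norm_num [hc1, hc2, this]
      · simp [hc1, hc2]
  -- each summand equals an affine function of t
  have hsummand : ∀ i ∈ U, ∀ t : ℝ,
      (∏ j, (1 - ((if C i j = 1 then (1 : ℝ) else 0) * Function.update v k t j +
              (if C i j = -1 then (1 : ℝ) else 0) * (1 - Function.update v k t j))))
      = 1 - ((if C i k = 1 then (1 : ℝ) else 0) * t +
              (if C i k = -1 then (1 : ℝ) else 0) * (1 - t)) := by
    intro i hi t
    rw [Fintype.prod_eq_single k]
    · rw [Function.update_self]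
    · intro j hj
      rw [Function.update_of_ne hj, hlit i hi j, sub_zero]
  -- derivative of each summand
  have hderiv : ∀ i ∈ U, HasDerivAt
      (fun t : ℝ => ∏ j, (1 - ((if C i j = 1 then (1 : ℝ) else 0) * Function.update v k t j +
              (if C i j = -1 then (1 : ℝ) else 0) * (1 - Function.update v k t j))))
      ((if C i k = -1 then (1 : ℝ) else 0) - (if C i k = 1 then (1 : ℝ) else 0)) (v k) := by
    intro i hi
    have haff : HasDerivAt
        (fun t : ℝ => 1 - ((if C i k = 1 then (1 : ℝ) else 0) * t +
              (if C i k = -1 then (1 : ℝ) else 0) * (1 - t)))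
        ((if C i k = -1 then (1 : ℝ) else 0) - (if C i k = 1 then (1 : ℝ) else 0)) (v k) := by
      have h := ((hasDerivAt_const (v k) (1 : ℝ)).sub
        (((hasDerivAt_id (v k)).const_mul (if C i k = 1 then (1 : ℝ) else 0)).add
          (((hasDerivAt_const (v k) (1 : ℝ)).sub (hasDerivAt_id (v k))).const_mul
            (if C i k = -1 then (1 : ℝ) else 0))))
      refine h.congr_deriv ?_
      ring
    exact haff.congr_of_eventuallyEq (Filter.Eventually.of_forall fun t => hsummand i hi t)
  have hsum := HasDerivAt.fun_sum hderiv
  have hmul := hsum.const_mul (1 / (m : ℝ))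
  refine hmul.congr_deriv ?_
  rw [hc₁, hc₂, Finset.sum_sub_distrib, Finset.sum_boole, Finset.sum_boole]
  ring
end
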